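/- SDCA with good initialization (Theorem 4, conditional form): Assume each φ_i is L-Lipschitz, together with the standing assumptions. Run the SDCA process from an initialization α^(0) ∈ ℝⁿ (with φ_i*(−α^(0)_i) < ∞ for all i) satisfying D(α*) − D(α^(0)) ≤ 2L² log(en)/(λn) (as is guaranteed in expectation by one epoch of Modified-SGD). Let ε_P > 0, and let T_0, T be integers with T_0 ≥ ⌈n log(log(en))⌉ + 16L²/(λ ε_P) and T − T_0 ≥ n + 4L²/(λ ε_P). Let ᾱ = (1/(T−T_0))∑_{t=T_0+1}^{T} α^(t−1) and w̄ = w(ᾱ). Then E[P(w̄) − D(ᾱ)] ≤ ε_P, and for every t ≥ T_0, E[D(α*) − D(α^(t))] ≤ ε_P/2. -/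

import Mathlib

open scoped BigOperators RealInnerProductSpace
open Finset

/-- The convex conjugate `φ*(u) = sup_z (z*u - φ z)` (as a real number; junk value
when the supremum is not finite). -/
noncomputable def fconj (φ : ℝ → ℝ) (u : ℝ) : ℝ := ⨆ z : ℝ, (z * u - φ z)

/-- `φ*(u) < ∞`, i.e. the defining supremum of the conjugate is finite. -/
def FiniteConj (φ : ℝ → ℝ) (u : ℝ) : Prop :=
  BddAbove (Set.range fun z => z * u - φ z)

/-- `g ∈ ∂φ(a)`: `g` is a subgradient of `φ` at `a`. -/
def IsSubgrad (φ : ℝ → ℝ) (a g : ℝ) : Prop :=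
  ∀ b, φ a + g * (b - a) ≤ φ b

/-- `u ∈ ∂φ*(b)`: `u` is a subgradient of the conjugate `φ*` at `b`
(the subgradient inequality being required at all points where `φ*` is finite). -/
def ConjSubgrad (φ : ℝ → ℝ) (b u : ℝ) : Prop :=
  FiniteConj φ b ∧ ∀ v, FiniteConj φ v → fconj φ b + u * (v - b) ≤ fconj φ v

section ConjLemmas

variable {φ : ℝ → ℝ} {L u v s : ℝ}

lemma fenchel_young (h : FiniteConj φ u) (z : ℝ) : z * u - φ z ≤ fconj φ u :=
  le_ciSup h z

lemma finiteConj_combo (hu : FiniteConj φ u) (hv : FiniteConj φ v)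
    (hs0 : 0 ≤ s) (hs1 : s ≤ 1) :
    FiniteConj φ ((1 - s) * u + s * v) := by
  refine ⟨(1 - s) * fconj φ u + s * fconj φ v, ?_⟩
  rintro y ⟨z, rfl⟩
  have h1 := mul_le_mul_of_nonneg_left (fenchel_young hu z) (by linarith : (0:ℝ) ≤ 1 - s)
  have h2 := mul_le_mul_of_nonneg_left (fenchel_young hv z) hs0
  calc z * ((1 - s) * u + s * v) - φ z
      = (1 - s) * (z * u - φ z) + s * (z * v - φ z) := by ring
    _ ≤ (1 - s) * fconj φ u + s * fconj φ v := add_le_add h1 h2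

lemma fconj_combo_le (hu : FiniteConj φ u) (hv : FiniteConj φ v)
    (hs0 : 0 ≤ s) (hs1 : s ≤ 1) :
    fconj φ ((1 - s) * u + s * v) ≤ (1 - s) * fconj φ u + s * fconj φ v := by
  refine ciSup_le fun z => ?_
  have h1 := mul_le_mul_of_nonneg_left (fenchel_young hu z) (by linarith : (0:ℝ) ≤ 1 - s)
  have h2 := mul_le_mul_of_nonneg_left (fenchel_young hv z) hs0
  calc z * ((1 - s) * u + s * v) - φ z
      = (1 - s) * (z * u - φ z) + s * (z * v - φ z) := by ring
    _ ≤ (1 - s) * fconj φ u + s * fconj φ v := add_le_add h1 h2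

lemma finiteConj_sum {ι : Type*} (t : Finset ι) (c : ι → ℝ) (u : ι → ℝ)
    (hc : ∀ i ∈ t, 0 ≤ c i) (hc1 : ∑ i ∈ t, c i = 1)
    (hu : ∀ i ∈ t, FiniteConj φ (u i)) :
    FiniteConj φ (∑ i ∈ t, c i * u i) ∧
      fconj φ (∑ i ∈ t, c i * u i) ≤ ∑ i ∈ t, c i * fconj φ (u i) := by
  have key : ∀ z : ℝ, z * (∑ i ∈ t, c i * u i) - φ z ≤ ∑ i ∈ t, c i * fconj φ (u i) := by
    intro z
    have heq : z * (∑ i ∈ t, c i * u i) - φ z = ∑ i ∈ t, c i * (z * u i - φ z) := by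
      have : ∑ i ∈ t, c i * (z * u i - φ z)
          = z * (∑ i ∈ t, c i * u i) - (∑ i ∈ t, c i) * φ z := by
        rw [Finset.mul_sum, Finset.sum_mul, ← Finset.sum_sub_distrib]
        exact Finset.sum_congr rfl fun i _ => by ring
      rw [this, hc1, one_mul]
    rw [heq]
    exact Finset.sum_le_sum fun i hi =>
      mul_le_mul_of_nonneg_left (fenchel_young (hu i hi) z) (hc i hi)
  exact ⟨⟨_, by rintro y ⟨z, rfl⟩; exact key z⟩, ciSup_le key⟩

lemma fconj_subgrad {a g : ℝ} (h : IsSubgrad φ a g) :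
    FiniteConj φ g ∧ fconj φ g = g * a - φ a := by
  have hub : ∀ z, z * g - φ z ≤ g * a - φ a := by
    intro z
    have hz := h z
    nlinarith [hz]
  have hfin : FiniteConj φ g := ⟨_, by rintro y ⟨z, rfl⟩; exact hub z⟩
  refine ⟨hfin, le_antisymm (ciSup_le hub) ?_⟩
  have := fenchel_young hfin a
  linarith [this, mul_comm a g]

lemma exists_subgrad (hconv : ConvexOn ℝ Set.univ φ)
    (hL : ∀ a b, |φ a - φ b| ≤ L * |a - b|) (a : ℝ) :
    ∃ g, IsSubgrad φ a g ∧ |g| ≤ L := by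
  set S : Set ℝ := (fun b => (φ a - φ b) / (a - b)) '' Set.Iio a with hS
  have hne : S.Nonempty := ⟨_, ⟨a - 1, by norm_num, rfl⟩⟩
  have hslope_le : ∀ b < a, (φ a - φ b) / (a - b) ≤ L := by
    intro b hb
    rw [div_le_iff₀ (by linarith)]
    calc φ a - φ b ≤ |φ a - φ b| := le_abs_self _
      _ ≤ L * |a - b| := hL a b
      _ = L * (a - b) := by rw [abs_of_pos (by linarith)]
  have hbdd : BddAbove S := ⟨L, by rintro y ⟨b, hb, rfl⟩; exact hslope_le b hb⟩
  set g := sSup S with hg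
  have hg_left : ∀ b < a, (φ a - φ b) / (a - b) ≤ g := fun b hb =>
    le_csSup hbdd ⟨b, hb, rfl⟩
  have hg_right : ∀ c, a < c → g ≤ (φ c - φ a) / (c - a) := by
    intro c hc
    refine csSup_le hne ?_
    rintro y ⟨b, hb, rfl⟩
    exact hconv.slope_mono_adjacent (Set.mem_univ b) (Set.mem_univ c) hb hc
  have hsub : IsSubgrad φ a g := by
    intro b
    rcases lt_trichotomy b a with hb | rfl | hb
    · have := hg_left b hb
      rw [div_le_iff₀ (by linarith)] at this
      nlinarith [this]
    · simp
    · have := hg_right b hb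
      rw [le_div_iff₀ (by linarith)] at this
      nlinarith [this]
  refine ⟨g, hsub, abs_le.2 ⟨?_, csSup_le hne (by rintro y ⟨b, hb, rfl⟩; exact hslope_le b hb)⟩⟩
  have h1 : (φ a - φ (a - 1)) / (a - (a - 1)) ≤ g := hg_left (a - 1) (by linarith)
  have h2 : -(L) ≤ (φ a - φ (a - 1)) / (a - (a - 1)) := by
    have habs := hL a (a - 1)
    have : |a - (a - 1)| = 1 := by norm_num
    rw [this, mul_one] at habs
    have := neg_abs_le (φ a - φ (a - 1))
    have h3 : a - (a - 1) = 1 := by ring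
    rw [h3, div_one]
    linarith [abs_le.1 habs]
  linarith

lemma abs_le_of_finiteConj (hL : ∀ a b, |φ a - φ b| ≤ L * |a - b|)
    (hφ0 : ∀ a, 0 ≤ φ a) (h : FiniteConj φ u) : |u| ≤ L := by
  by_contra hcon
  push_neg at hcon
  obtain ⟨M, hM⟩ := h
  set t : ℝ := max 0 ((M + φ 0 + 1) / (|u| - L)) with ht
  have ht0 : 0 ≤ t := le_max_left _ _
  set z : ℝ := if 0 ≤ u then t else -t with hzdef
  have hzu : z * u = t * |u| := by
    by_cases h0 : 0 ≤ u
    · simp only [hzdef, if_pos h0]; rw [abs_of_nonneg h0]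
    · simp only [hzdef, if_neg h0]
      push_neg at h0
      rw [abs_of_neg h0]; ring
  have hzabs : |z| = t := by
    by_cases h0 : 0 ≤ u
    · simp only [hzdef, if_pos h0]; exact abs_of_nonneg ht0
    · simp only [hzdef, if_neg h0]; rw [abs_neg]; exact abs_of_nonneg ht0
  have hφz : φ z ≤ φ 0 + L * t := by
    have habs := hL z 0
    rw [sub_zero, hzabs] at habs
    linarith [abs_le.1 habs]
  have hmem : z * u - φ z ≤ M := hM ⟨z, rfl⟩
  have htge : (M + φ 0 + 1) / (|u| - L) ≤ t := le_max_right _ _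
  have ht2 : M + φ 0 + 1 ≤ t * (|u| - L) := by
    rw [div_le_iff₀ (by linarith)] at htge
    linarith [htge]
  nlinarith [hmem, ht2, hφz, hzu]

end ConjLemmas


/-- Dual feasibility: `φ_i*(-α_i) < ∞` for all `i`. -/
def Feas {n : ℕ} (φ : Fin n → ℝ → ℝ) (α : Fin n → ℝ) : Prop :=
  ∀ i, FiniteConj (φ i) (-(α i))

/-- `w(α) = (1/(λ n)) ∑ι α_i x_i`. -/
noncomputable def wvec {n d : ℕ} (lam : ℝ) (x : Fin n → EuclideanSpace ℝ (Fin d))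
    (α : Fin n → ℝ) : EuclideanSpace ℝ (Fin d) :=
  (1 / (lam * (n : ℝ))) • ∑ i, α i • x i

/-- The primal objective `P(w)`. -/
noncomputable def primalObj {n d : ℕ} (lam : ℝ) (x : Fin n → EuclideanSpace ℝ (Fin d))
    (φ : Fin n → ℝ → ℝ) (w : EuclideanSpace ℝ (Fin d)) : ℝ :=
  (1 / (n : ℝ)) * ∑ i, φ i ⟪x i, w⟫ + lam / 2 * ‖w‖ ^ 2

/-- The dual objective `D(α)`. -/
noncomputable def dualObj {n d : ℕ} (lam : ℝ) (x : Fin n → EuclideanSpace ℝ (Fin d))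
    (φ : Fin n → ℝ → ℝ) (α : Fin n → ℝ) : ℝ :=
  (1 / (n : ℝ)) * ∑ i, -(fconj (φ i) (-(α i))) - lam / 2 * ‖wvec lam x α‖ ^ 2

section Alg

variable {n d : ℕ} {lam : ℝ} {x : Fin n → EuclideanSpace ℝ (Fin d)}
  {φ : Fin n → ℝ → ℝ}

lemma sum_update_smul (α : Fin n → ℝ) (i : Fin n) (c : ℝ) :
    ∑ j, (Function.update α i c) j • x j = (∑ j, α j • x j) + (c - α i) • x i := by
  have key : ∀ j : Fin n, (Function.update α i c) j • x j
      = α j • x j + (if j = i then (c - α i) • x i else 0) := by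
    intro j
    by_cases h : j = i
    · subst h
      rw [Function.update_self, if_pos rfl, ← add_smul]
      congr 1; ring
    · rw [Function.update_of_ne h, if_neg h, add_zero]
  rw [Finset.sum_congr rfl fun j _ => key j, Finset.sum_add_distrib]
  congr 1
  simp

lemma wvec_update (hlam : 0 < lam) (hn : 0 < n) (α : Fin n → ℝ) (i : Fin n) (c : ℝ) :
    wvec lam x (Function.update α i c)
      = wvec lam x α + ((c - α i) / (lam * n)) • x i := by
  unfold wvec
  rw [sum_update_smul, smul_add, smul_smul]
  congr 2
  field_simp

lemma inner_wvec (α : Fin n → ℝ) (w : EuclideanSpace ℝ (Fin d)) :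
    ⟪wvec lam x α, w⟫ = (1 / (lam * n)) * ∑ i, α i * ⟪x i, w⟫ := by
  unfold wvec
  rw [real_inner_smul_left, sum_inner]
  congr 1
  exact Finset.sum_congr rfl fun i _ => real_inner_smul_left _ _ _

lemma sum_mul_inner_self (hlam : 0 < lam) (hn : 0 < n) (α : Fin n → ℝ) :
    ∑ i, α i * ⟪x i, wvec lam x α⟫ = (n : ℝ) * lam * ‖wvec lam x α‖ ^ 2 := by
  have h := inner_wvec (lam := lam) (x := x) α (wvec lam x α)
  rw [real_inner_self_eq_norm_sq] at h
  have hn' : (n : ℝ) ≠ 0 := Nat.cast_ne_zero.2 hn.ne'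
  have hlam' : lam ≠ 0 := hlam.ne'
  set S := ∑ i, α i * ⟪x i, wvec lam x α⟫ with hS
  clear_value S
  rw [h]
  field_simp

lemma sum_neg_fconj_update (α : Fin n → ℝ) (i : Fin n) (c : ℝ) :
    ∑ j, -(fconj (φ j) (-(Function.update α i c j)))
      = (∑ j, -(fconj (φ j) (-(α j)))) + (fconj (φ i) (-(α i)) - fconj (φ i) (-c)) := by
  have key : ∀ j : Fin n, -(fconj (φ j) (-(Function.update α i c j)))
      = -(fconj (φ j) (-(α j)))
        + (if j = i then fconj (φ i) (-(α i)) - fconj (φ i) (-c) else 0) := by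
    intro j
    by_cases h : j = i
    · subst h; rw [Function.update_self, if_pos rfl]; ring
    · rw [Function.update_of_ne h, if_neg h, add_zero]
  rw [Finset.sum_congr rfl fun j _ => key j, Finset.sum_add_distrib]
  congr 1
  simp

lemma dual_update (hlam : 0 < lam) (hn : 0 < n) (α : Fin n → ℝ) (i : Fin n) (c : ℝ) :
    dualObj lam x φ (Function.update α i c) - dualObj lam x φ α
      = (1 / (n : ℝ)) * (fconj (φ i) (-(α i)) - fconj (φ i) (-c))
        - ((c - α i) / n) * ⟪x i, wvec lam x α⟫
        - (c - α i) ^ 2 * ‖x i‖ ^ 2 / (2 * lam * n ^ 2) := by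
  have hn' : (n : ℝ) ≠ 0 := Nat.cast_ne_zero.2 hn.ne'
  have hlam' : lam ≠ 0 := hlam.ne'
  set w := wvec lam x α with hw
  set δ := (c - α i) / (lam * n) with hδ
  have hupd : wvec lam x (Function.update α i c) = w + δ • x i := wvec_update hlam hn α i c
  have hnorm : ‖w + δ • x i‖ ^ 2 = ‖w‖ ^ 2 + 2 * (δ * ⟪x i, w⟫) + δ ^ 2 * ‖x i‖ ^ 2 := by
    rw [norm_add_sq_real, real_inner_smul_right, real_inner_comm, norm_smul]
    rw [mul_pow, Real.norm_eq_abs, sq_abs]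
  unfold dualObj
  rw [hupd, hnorm, sum_neg_fconj_update, ← hw]
  have hδ' : δ = (c - α i) / (lam * n) := hδ
  rw [hδ']
  field_simp
  ring

lemma weak_duality (hlam : 0 < lam) (hn : 0 < n) (β : Fin n → ℝ) (hβ : Feas φ β)
    (w : EuclideanSpace ℝ (Fin d)) :
    dualObj lam x φ β ≤ primalObj lam x φ w := by
  have hn' : (n : ℝ) ≠ 0 := Nat.cast_ne_zero.2 hn.ne'
  have hn0 : (0:ℝ) < (n : ℝ) := by exact_mod_cast hn
  have h1 : ∀ i, -(fconj (φ i) (-(β i))) ≤ φ i ⟪x i, w⟫ + β i * ⟪x i, w⟫ := by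
    intro i
    have := fenchel_young (hβ i) ⟪x i, w⟫
    nlinarith [this]
  have h2 : (1 / (n : ℝ)) * ∑ i, -(fconj (φ i) (-(β i)))
      ≤ (1 / (n : ℝ)) * ∑ i, φ i ⟪x i, w⟫ + (1 / (n : ℝ)) * ∑ i, β i * ⟪x i, w⟫ := by
    rw [← mul_add, ← Finset.sum_add_distrib]
    exact mul_le_mul_of_nonneg_left (Finset.sum_le_sum fun i _ => h1 i) (by positivity)
  have h3 : (1 / (n : ℝ)) * ∑ i, β i * ⟪x i, w⟫ = lam * ⟪wvec lam x β, w⟫ := by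
    rw [inner_wvec]
    field_simp
  have h4 : lam * ⟪wvec lam x β, w⟫ - lam / 2 * ‖wvec lam x β‖ ^ 2 ≤ lam / 2 * ‖w‖ ^ 2 := by
    have hns := norm_sub_sq_real w (wvec lam x β)
    have hnn : (0:ℝ) ≤ ‖w - wvec lam x β‖ ^ 2 := sq_nonneg _
    have hcomm : ⟪wvec lam x β, w⟫ = ⟪w, wvec lam x β⟫ := real_inner_comm _ _
    nlinarith [hlam]
  unfold dualObj primalObj
  linarith [h2, h3, h4]

end Alg

section Key

variable {n d : ℕ} {lam : ℝ} {x : Fin n → EuclideanSpace ℝ (Fin d)}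
  {φ : Fin n → ℝ → ℝ} {L : ℝ}

lemma convexOn_norm_sq :
    ConvexOn ℝ (Set.univ : Set (EuclideanSpace ℝ (Fin d))) (fun w => ‖w‖ ^ 2) := by
  refine ⟨convex_univ, ?_⟩
  intro p _ q _ a b ha hb hab
  have hexp : ‖a • p + b • q‖ ^ 2
      = a ^ 2 * ‖p‖ ^ 2 + 2 * (a * b * ⟪p, q⟫) + b ^ 2 * ‖q‖ ^ 2 := by
    rw [norm_add_sq_real, real_inner_smul_left, real_inner_smul_right, norm_smul, norm_smul,
      mul_pow, mul_pow, Real.norm_eq_abs, Real.norm_eq_abs, sq_abs, sq_abs]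
    ring
  have hCS := real_inner_le_norm p q
  simp only [smul_eq_mul]
  nlinarith [hexp, mul_le_mul_of_nonneg_left hCS (mul_nonneg ha hb),
    mul_nonneg (mul_nonneg ha hb) (sq_nonneg (‖p‖ - ‖q‖))]

set_option maxHeartbeats 1000000 in
lemma key_step (hlam : 0 < lam) (hn : 0 < n)
    (hconv : ∀ i, ConvexOn ℝ Set.univ (φ i))
    (hL : ∀ i, ∀ a b : ℝ, |φ i a - φ i b| ≤ L * |a - b|)
    (hx : ∀ i, ‖x i‖ ≤ 1) (hφ0 : ∀ i a, 0 ≤ φ i a)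
    (step : (Fin n → ℝ) → Fin n → (Fin n → ℝ))
    (hstep_max : ∀ α i c, Feas φ (Function.update α i c) →
      dualObj lam x φ (Function.update α i c) ≤ dualObj lam x φ (step α i))
    (α : Fin n → ℝ) (hα : Feas φ α) {s : ℝ} (hs0 : 0 ≤ s) (hs1 : s ≤ 1) :
    s / n * (primalObj lam x φ (wvec lam x α) - dualObj lam x φ α)
      - (s / n) ^ 2 * (2 * L ^ 2 / lam)
    ≤ (1 / (n : ℝ)) * ∑ i, (dualObj lam x φ (step α i) - dualObj lam x φ α) := by
  have hn' : (n : ℝ) ≠ 0 := Nat.cast_ne_zero.2 hn.ne'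
  have hnR : (0 : ℝ) < n := by exact_mod_cast hn
  have per : ∀ i : Fin n,
      s / n * (φ i ⟪x i, wvec lam x α⟫ + fconj (φ i) (-(α i)) + α i * ⟪x i, wvec lam x α⟫)
        - (s / n) ^ 2 * (2 * L ^ 2 / lam)
      ≤ dualObj lam x φ (step α i) - dualObj lam x φ α := by
    intro i
    set a := ⟪x i, wvec lam x α⟫ with ha
    obtain ⟨g, hg, hgL⟩ := exists_subgrad (hconv i) (hL i) a
    obtain ⟨hgfin, hgval⟩ := fconj_subgrad hg
    set c : ℝ := α i + s * (-g - α i) with hc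
    have hcneg : -c = (1 - s) * (-(α i)) + s * g := by rw [hc]; ring
    have hfinc : FiniteConj (φ i) (-c) := by
      rw [hcneg]; exact finiteConj_combo (hα i) hgfin hs0 hs1
    have hfeas_upd : Feas φ (Function.update α i c) := by
      intro j
      by_cases h : j = i
      · subst h; rw [Function.update_self]; exact hfinc
      · rw [Function.update_of_ne h]; exact hα j
    have hstep := hstep_max α i c hfeas_upd
    have hdu := dual_update (x := x) (φ := φ) hlam hn α i c
    rw [← ha] at hdu
    have hfc_le : fconj (φ i) (-c) ≤ (1 - s) * fconj (φ i) (-(α i)) + s * (g * a - φ i a) := by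
      rw [hcneg, ← hgval]
      exact fconj_combo_le (hα i) hgfin hs0 hs1
    have hαL : |α i| ≤ L := by
      have := abs_le_of_finiteConj (hL i) (hφ0 i) (hα i); rwa [abs_neg] at this
    have hq : (c - α i) ^ 2 * ‖x i‖ ^ 2 / (2 * lam * (n : ℝ) ^ 2)
        ≤ (s / n) ^ 2 * (2 * L ^ 2 / lam) := by
      have h2 : (-g - α i) ^ 2 ≤ 4 * L ^ 2 := by
        nlinarith [abs_le.1 hgL, abs_le.1 hαL]
      have hx2 : ‖x i‖ ^ 2 ≤ 1 := by nlinarith [norm_nonneg (x i), hx i]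
      have h3 : (c - α i) ^ 2 * ‖x i‖ ^ 2 ≤ s ^ 2 * (4 * L ^ 2) := by
        have h1 : (c - α i) ^ 2 = s ^ 2 * (-g - α i) ^ 2 := by rw [hc]; ring
        nlinarith [sq_nonneg (c - α i), sq_nonneg s, norm_nonneg (x i), sq_nonneg (-g - α i)]
      have hrw : (s / n) ^ 2 * (2 * L ^ 2 / lam) = s ^ 2 * (4 * L ^ 2) / (2 * lam * (n : ℝ) ^ 2) := by
        field_simp
        ring
      rw [hrw]
      gcongr
    have expand : (1 / (n : ℝ)) * (fconj (φ i) (-(α i))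
          - ((1 - s) * fconj (φ i) (-(α i)) + s * (g * a - φ i a)))
        - ((s * (-g - α i)) / n) * a
        = s / n * (φ i a + fconj (φ i) (-(α i)) + α i * a) := by
      field_simp
      ring
    have hc_sub : c - α i = s * (-g - α i) := by rw [hc]; ring
    rw [hc_sub] at hdu hq
    have hmono : (1 / (n : ℝ)) * (fconj (φ i) (-(α i))
          - ((1 - s) * fconj (φ i) (-(α i)) + s * (g * a - φ i a)))
        ≤ (1 / (n : ℝ)) * (fconj (φ i) (-(α i)) - fconj (φ i) (-c)) := by
      apply mul_le_mul_of_nonneg_left _ (by positivity)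
      linarith [hfc_le]
    linarith [hstep, hdu, hq, hmono, expand]
  have hid := sum_mul_inner_self (x := x) hlam hn α
  have hPD : ∑ i, (φ i ⟪x i, wvec lam x α⟫ + fconj (φ i) (-(α i)) + α i * ⟪x i, wvec lam x α⟫)
      = (n : ℝ) * (primalObj lam x φ (wvec lam x α) - dualObj lam x φ α) := by
    have hneg : ∑ i, -(fconj (φ i) (-(α i))) = -∑ i, fconj (φ i) (-(α i)) :=
      Finset.sum_neg_distrib _
    unfold primalObj dualObj
    rw [Finset.sum_add_distrib, Finset.sum_add_distrib, hid, hneg]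
    set S1 := ∑ i, φ i ⟪x i, wvec lam x α⟫ with hS1
    set S2 := ∑ i, fconj (φ i) (-(α i)) with hS2
    set N := ‖wvec lam x α‖ ^ 2 with hN
    clear_value S1 S2 N
    field_simp
    ring
  have heq : s / n * (primalObj lam x φ (wvec lam x α) - dualObj lam x φ α)
        - (s / n) ^ 2 * (2 * L ^ 2 / lam)
      = (1 / (n : ℝ)) * ∑ i,
          (s / n * (φ i ⟪x i, wvec lam x α⟫ + fconj (φ i) (-(α i)) + α i * ⟪x i, wvec lam x α⟫)
            - (s / n) ^ 2 * (2 * L ^ 2 / lam)) := by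
    rw [Finset.sum_sub_distrib, ← Finset.mul_sum, hPD, Finset.sum_const, Finset.card_univ,
      Fintype.card_fin, nsmul_eq_mul]
    set PD := primalObj lam x φ (wvec lam x α) - dualObj lam x φ α with hPDdef
    clear_value PD
    field_simp
  rw [heq]
  exact mul_le_mul_of_nonneg_left (Finset.sum_le_sum fun i _ => per i) (by positivity)

end Key


/-- The SDCA trajectory: `α^(0) = α0`, `α^(t+1) = step α^(t) (idx t)`. -/
noncomputable def traj {n : ℕ} (step : (Fin n → ℝ) → Fin n → (Fin n → ℝ))
    (α0 : Fin n → ℝ) (idx : ℕ → Fin n) : ℕ → (Fin n → ℝ)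
  | 0 => α0
  | t + 1 => step (traj step α0 idx t) (idx t)

/-- Expectation over the first `t` coordinates of a uniformly random i.i.d. index
sequence, applied to a function `g` of the index sequence (which should depend
only on the first `t` indices). -/
noncomputable def ExpIdx {n : ℕ} (hn : 0 < n) (t : ℕ) (g : (ℕ → Fin n) → ℝ) : ℝ :=
  (∑ idx : Fin t → Fin n,
      g (fun k => if h : k < t then idx ⟨k, h⟩ else (⟨0, hn⟩ : Fin n))) / (n : ℝ) ^ t

section Exp

variable {n : ℕ} (hn : 0 < n)

def extS (t : ℕ) (f : Fin t → Fin n) : ℕ → Fin n :=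
  fun k => if h : k < t then f ⟨k, h⟩ else (⟨0, hn⟩ : Fin n)

lemma ExpIdx_eq (t : ℕ) (g : (ℕ → Fin n) → ℝ) :
    ExpIdx hn t g = (∑ f : Fin t → Fin n, g (extS hn t f)) / (n : ℝ) ^ t := rfl

lemma ExpIdx_mono {t : ℕ} {g1 g2 : (ℕ → Fin n) → ℝ} (h : ∀ idx, g1 idx ≤ g2 idx) :
    ExpIdx hn t g1 ≤ ExpIdx hn t g2 := by
  rw [ExpIdx_eq, ExpIdx_eq]
  gcongr
  exact h _

lemma ExpIdx_const (t : ℕ) (c : ℝ) : ExpIdx hn t (fun _ => c) = c := by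
  rw [ExpIdx_eq, Finset.sum_const, Finset.card_univ]
  have : (Fintype.card (Fin t → Fin n) : ℝ) = (n : ℝ) ^ t := by
    rw [Fintype.card_fun, Fintype.card_fin, Fintype.card_fin]; push_cast; ring
  rw [nsmul_eq_mul, this]
  have hpow : ((n : ℝ)) ^ t ≠ 0 := by positivity
  field_simp

lemma ExpIdx_add (t : ℕ) (g1 g2 : (ℕ → Fin n) → ℝ) :
    ExpIdx hn t (fun idx => g1 idx + g2 idx) = ExpIdx hn t g1 + ExpIdx hn t g2 := by
  rw [ExpIdx_eq, ExpIdx_eq, ExpIdx_eq, ← add_div, Finset.sum_add_distrib]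

lemma ExpIdx_sub (t : ℕ) (g1 g2 : (ℕ → Fin n) → ℝ) :
    ExpIdx hn t (fun idx => g1 idx - g2 idx) = ExpIdx hn t g1 - ExpIdx hn t g2 := by
  rw [ExpIdx_eq, ExpIdx_eq, ExpIdx_eq, ← sub_div, Finset.sum_sub_distrib]

lemma ExpIdx_mul_const (t : ℕ) (c : ℝ) (g : (ℕ → Fin n) → ℝ) :
    ExpIdx hn t (fun idx => c * g idx) = c * ExpIdx hn t g := by
  rw [ExpIdx_eq, ExpIdx_eq, ← Finset.mul_sum, mul_div_assoc]

lemma ExpIdx_finsum {ι : Type*} (t : ℕ) (s : Finset ι) (G : ι → (ℕ → Fin n) → ℝ) :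
    ExpIdx hn t (fun idx => ∑ k ∈ s, G k idx) = ∑ k ∈ s, ExpIdx hn t (G k) := by
  rw [ExpIdx_eq]
  rw [Finset.sum_comm]
  rw [Finset.sum_div]
  exact Finset.sum_congr rfl fun k _ => (ExpIdx_eq hn t (G k)).symm

lemma extS_snoc (t : ℕ) (p : Fin t → Fin n) (i : Fin n) :
    extS hn (t + 1) (Fin.snoc p i) = Function.update (extS hn t p) t i := by
  funext k
  rcases lt_trichotomy k t with hk | hk | hk
  · rw [Function.update_of_ne (by omega)]
    unfold extS
    rw [dif_pos (by omega : k < t + 1), dif_pos hk]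
    have he : (⟨k, by omega⟩ : Fin (t + 1)) = Fin.castSucc ⟨k, hk⟩ := rfl
    rw [he, Fin.snoc_castSucc]
  · subst hk
    rw [Function.update_self]
    unfold extS
    rw [dif_pos (by omega : k < k + 1)]
    have he : (⟨k, by omega⟩ : Fin (k + 1)) = Fin.last k := rfl
    rw [he, Fin.snoc_last]
  · rw [Function.update_of_ne (by omega)]
    unfold extS
    rw [dif_neg (by omega), dif_neg (by omega)]

lemma ExpIdx_succ (t : ℕ) (g : (ℕ → Fin n) → ℝ) :
    ExpIdx hn (t + 1) g
      = ExpIdx hn t (fun idx => (∑ i : Fin n, g (Function.update idx t i)) / n) := by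
  rw [ExpIdx_eq, ExpIdx_eq]
  let e : ((Fin t → Fin n) × Fin n) ≃ (Fin (t + 1) → Fin n) :=
    { toFun := fun pi => Fin.snoc pi.1 pi.2
      invFun := fun f => (Fin.init f, f (Fin.last t))
      left_inv := fun pi => by
        simp [Fin.init_snoc, Fin.snoc_last]
      right_inv := fun f => Fin.snoc_init_self f }
  have hsum : ∑ f : Fin (t + 1) → Fin n, g (extS hn (t + 1) f)
      = ∑ pi : (Fin t → Fin n) × Fin n, g (extS hn (t + 1) (Fin.snoc pi.1 pi.2)) :=
    (Fintype.sum_equiv e _ _ fun pi => rfl).symm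
  rw [hsum, Fintype.sum_prod_type]
  have hinner : ∀ p : Fin t → Fin n, ∀ i : Fin n,
      g (extS hn (t + 1) (Fin.snoc p i)) = g (Function.update (extS hn t p) t i) := by
    intro p i; rw [extS_snoc]
  rw [Finset.sum_congr rfl fun p _ => Finset.sum_congr rfl fun i _ => hinner p i]
  rw [← Finset.sum_div, div_div, pow_succ, mul_comm ((n:ℝ) ^ t) (n:ℝ)]

lemma traj_congr {step : (Fin n → ℝ) → Fin n → (Fin n → ℝ)} {α0 : Fin n → ℝ}
    {idx1 idx2 : ℕ → Fin n} {t : ℕ} (h : ∀ k < t, idx1 k = idx2 k) :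
    traj step α0 idx1 t = traj step α0 idx2 t := by
  induction t with
  | zero => rfl
  | succ t ih =>
    show step (traj step α0 idx1 t) (idx1 t) = step (traj step α0 idx2 t) (idx2 t)
    rw [ih fun k hk => h k (by omega), h t (by omega)]

lemma ExpIdx_indep (t : ℕ) (g : (ℕ → Fin n) → ℝ)
    (hg : ∀ idx1 idx2 : ℕ → Fin n, (∀ k < t, idx1 k = idx2 k) → g idx1 = g idx2) :
    ExpIdx hn (t + 1) g = ExpIdx hn t g := by
  rw [ExpIdx_succ]
  apply congrArg (ExpIdx hn t)
  funext idx
  have : ∀ i : Fin n, g (Function.update idx t i) = g idx := by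
    intro i
    apply hg
    intro k hk
    rw [Function.update_of_ne (by omega)]
  rw [Finset.sum_congr rfl fun i _ => this i, Finset.sum_const, Finset.card_univ,
    Fintype.card_fin, nsmul_eq_mul]
  have hn' : (n : ℝ) ≠ 0 := Nat.cast_ne_zero.2 hn.ne'
  field_simp

lemma ExpIdx_traj_succ (step : (Fin n → ℝ) → Fin n → (Fin n → ℝ)) (α0 : Fin n → ℝ)
    (t : ℕ) (F : (Fin n → ℝ) → ℝ) :
    ExpIdx hn (t + 1) (fun idx => F (traj step α0 idx (t + 1)))
      = ExpIdx hn t (fun idx => (∑ i : Fin n, F (step (traj step α0 idx t) i)) / n) := by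
  rw [ExpIdx_succ]
  apply congrArg (ExpIdx hn t)
  funext idx
  congr 1
  refine Finset.sum_congr rfl fun i _ => ?_
  show F (traj step α0 (Function.update idx t i) (t + 1)) = _
  have h1 : traj step α0 (Function.update idx t i) (t + 1)
      = step (traj step α0 (Function.update idx t i) t) ((Function.update idx t i) t) := rfl
  have h2 : traj step α0 (Function.update idx t i) t = traj step α0 idx t := by
    apply traj_congr
    intro k hk
    rw [Function.update_of_ne (Nat.ne_of_lt hk)]
  rw [h1, Function.update_self, h2]

lemma ExpIdx_traj_stable (step : (Fin n → ℝ) → Fin n → (Fin n → ℝ)) (α0 : Fin n → ℝ)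
    {t T : ℕ} (h : t ≤ T) (F : (Fin n → ℝ) → ℝ) :
    ExpIdx hn T (fun idx => F (traj step α0 idx t))
      = ExpIdx hn t (fun idx => F (traj step α0 idx t)) := by
  induction T with
  | zero =>
    have : t = 0 := by omega
    subst this; rfl
  | succ T ih =>
    rcases Nat.eq_or_lt_of_le h with h' | h'
    · subst h'; rfl
    · have ht : t ≤ T := by omega
      rw [ExpIdx_indep hn T _
        (fun i1 i2 hh => congrArg F (traj_congr fun k hk => hh k (hk.trans_le ht))), ih ht]

end Exp

section Avg

variable {n d : ℕ} {lam : ℝ} {x : Fin n → EuclideanSpace ℝ (Fin d)}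
  {φ : Fin n → ℝ → ℝ}

lemma wvec_sum {ι : Type*} (t : Finset ι) (c : ι → ℝ) (A : ι → Fin n → ℝ) :
    wvec lam x (∑ k ∈ t, c k • A k) = ∑ k ∈ t, c k • wvec lam x (A k) := by
  unfold wvec
  have h1 : ∀ i : Fin n, ((∑ k ∈ t, c k • A k) i) • x i = ∑ k ∈ t, c k • ((A k i) • x i) := by
    intro i
    rw [Finset.sum_apply, Finset.sum_smul]
    exact Finset.sum_congr rfl fun k _ => by
      rw [Pi.smul_apply, smul_eq_mul, ← smul_smul]
  rw [Finset.sum_congr rfl fun i _ => h1 i, Finset.sum_comm, Finset.smul_sum]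
  refine Finset.sum_congr rfl fun k _ => ?_
  rw [← Finset.smul_sum, smul_comm]

lemma gap_decomp (hlam : 0 < lam) (hn : 0 < n) (β : Fin n → ℝ) :
    primalObj lam x φ (wvec lam x β) - dualObj lam x φ β
      = (1 / (n : ℝ)) * ∑ i, (φ i ⟪x i, wvec lam x β⟫ + fconj (φ i) (-(β i)))
        + lam * ‖wvec lam x β‖ ^ 2 := by
  have hneg : ∑ i, -(fconj (φ i) (-(β i))) = -∑ i, fconj (φ i) (-(β i)) :=
    Finset.sum_neg_distrib _
  unfold primalObj dualObj
  rw [Finset.sum_add_distrib, hneg]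
  ring

lemma gap_avg (hlam : 0 < lam) (hn : 0 < n) (hconv : ∀ i, ConvexOn ℝ Set.univ (φ i))
    {ι : Type*} (t : Finset ι) (A : ι → Fin n → ℝ) (c : ι → ℝ)
    (hc : ∀ k ∈ t, 0 ≤ c k) (hc1 : ∑ k ∈ t, c k = 1) (hA : ∀ k ∈ t, Feas φ (A k)) :
    primalObj lam x φ (wvec lam x (∑ k ∈ t, c k • A k))
      - dualObj lam x φ (∑ k ∈ t, c k • A k)
    ≤ ∑ k ∈ t, c k * (primalObj lam x φ (wvec lam x (A k)) - dualObj lam x φ (A k)) := by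
  have hwv := wvec_sum (lam := lam) (x := x) t c A
  have hφpart : ∀ i : Fin n, φ i ⟪x i, wvec lam x (∑ k ∈ t, c k • A k)⟫
      ≤ ∑ k ∈ t, c k * φ i ⟪x i, wvec lam x (A k)⟫ := by
    intro i
    rw [hwv, inner_sum]
    rw [Finset.sum_congr rfl fun k (_ : k ∈ t) => real_inner_smul_right (x i) (wvec lam x (A k)) (c k)]
    have hj := (hconv i).map_sum_le hc hc1 (fun k _ => Set.mem_univ
      (⟪x i, wvec lam x (A k)⟫ : ℝ))
    simpa [smul_eq_mul] using hj
  have hnorm : ‖wvec lam x (∑ k ∈ t, c k • A k)‖ ^ 2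
      ≤ ∑ k ∈ t, c k * ‖wvec lam x (A k)‖ ^ 2 := by
    rw [hwv]
    have hj := (convexOn_norm_sq (d := d)).map_sum_le hc hc1
      (fun k _ => Set.mem_univ (wvec lam x (A k)))
    simpa [smul_eq_mul] using hj
  have hfc : ∀ i : Fin n, fconj (φ i) (-((∑ k ∈ t, c k • A k) i))
      ≤ ∑ k ∈ t, c k * fconj (φ i) (-(A k i)) := by
    intro i
    have harg : -((∑ k ∈ t, c k • A k) i) = ∑ k ∈ t, c k * (-(A k i)) := by
      rw [Finset.sum_apply, ← Finset.sum_neg_distrib]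
      exact Finset.sum_congr rfl fun k _ => by
        rw [Pi.smul_apply, smul_eq_mul, mul_neg]
    rw [harg]
    exact (finiteConj_sum t c (fun k => -(A k i)) hc hc1 (fun k hk => hA k hk i)).2
  have hnR : (0 : ℝ) < n := by exact_mod_cast hn
  rw [gap_decomp hlam hn]
  have hRHS : ∑ k ∈ t, c k * (primalObj lam x φ (wvec lam x (A k)) - dualObj lam x φ (A k))
      = (1 / (n : ℝ)) * ∑ i, (∑ k ∈ t, c k * (φ i ⟪x i, wvec lam x (A k)⟫
          + fconj (φ i) (-(A k i))))
        + lam * ∑ k ∈ t, c k * ‖wvec lam x (A k)‖ ^ 2 := by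
    rw [Finset.sum_congr rfl fun k (hk : k ∈ t) => congrArg (c k * ·) (gap_decomp hlam hn (A k))]
    simp only [mul_add]
    rw [Finset.sum_add_distrib]
    congr 1
    · simp only [Finset.mul_sum]
      rw [Finset.sum_comm]
      exact Finset.sum_congr rfl fun i _ => Finset.sum_congr rfl fun k _ => by ring
    · rw [Finset.mul_sum]
      exact Finset.sum_congr rfl fun k _ => by ring
  rw [hRHS]
  have hsum1 : ∑ i, (φ i ⟪x i, wvec lam x (∑ k ∈ t, c k • A k)⟫
        + fconj (φ i) (-((∑ k ∈ t, c k • A k) i)))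
      ≤ ∑ i, (∑ k ∈ t, c k * (φ i ⟪x i, wvec lam x (A k)⟫ + fconj (φ i) (-(A k i)))) := by
    refine Finset.sum_le_sum fun i _ => ?_
    have := add_le_add (hφpart i) (hfc i)
    rw [← Finset.sum_add_distrib] at this
    refine this.trans (le_of_eq (Finset.sum_congr rfl fun k _ => by ring))
  have hfin1 : (1 / (n : ℝ)) * ∑ i, (φ i ⟪x i, wvec lam x (∑ k ∈ t, c k • A k)⟫
        + fconj (φ i) (-((∑ k ∈ t, c k • A k) i)))
      ≤ (1 / (n : ℝ)) * ∑ i, (∑ k ∈ t, c k * (φ i ⟪x i, wvec lam x (A k)⟫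
          + fconj (φ i) (-(A k i)))) :=
    mul_le_mul_of_nonneg_left hsum1 (by positivity)
  have hfin2 : lam * ‖wvec lam x (∑ k ∈ t, c k • A k)‖ ^ 2
      ≤ lam * ∑ k ∈ t, c k * ‖wvec lam x (A k)‖ ^ 2 :=
    mul_le_mul_of_nonneg_left hnorm hlam.le
  linarith [hfin1, hfin2]

end Avg

set_option maxHeartbeats 1000000 in
/-- Theorem 4 (conditional form): SDCA for `L`-Lipschitz losses started from an
initialization whose dual suboptimality is at most `2L² log(en)/(λn)` (as
guaranteed by one epoch of Modified-SGD). With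
`T₀ ≥ ⌈n log(log(en))⌉ + 16L²/(λ ε_P)` and `T - T₀ ≥ n + 4L²/(λ ε_P)`, the
expected duality gap of the averaged iterate is at most `ε_P`, and the expected
dual suboptimality at any time `t ≥ T₀` is at most `ε_P / 2`. -/
theorem sdca_with_sgd_init
    (n d : ℕ) (hn : 0 < n)
    (x : Fin n → EuclideanSpace ℝ (Fin d))
    (φ : Fin n → ℝ → ℝ) (hconv : ∀ i, ConvexOn ℝ Set.univ (φ i))
    (lam : ℝ) (hlam : 0 < lam)
    (L : ℝ) (hL : ∀ i, ∀ a b : ℝ, |φ i a - φ i b| ≤ L * |a - b|)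
    (hx : ∀ i, ‖x i‖ ≤ 1) (hφ0 : ∀ i a, 0 ≤ φ i a) (hφ1 : ∀ i, φ i 0 ≤ 1)
    (step : (Fin n → ℝ) → Fin n → (Fin n → ℝ))
    (hstep_off : ∀ α i j, j ≠ i → step α i j = α j)
    (hstep_feas : ∀ α i, Feas φ α → Feas φ (step α i))
    (hstep_max : ∀ α i c, Feas φ (Function.update α i c) →
      dualObj lam x φ (Function.update α i c) ≤ dualObj lam x φ (step α i))
    (αstar : Fin n → ℝ) (hstar_feas : Feas φ αstar)
    (hstar_max : ∀ β, Feas φ β → dualObj lam x φ β ≤ dualObj lam x φ αstar)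
    (α0 : Fin n → ℝ) (hα0_feas : Feas φ α0)
    (hα0 : dualObj lam x φ αstar - dualObj lam x φ α0
        ≤ 2 * L ^ 2 * Real.log (Real.exp 1 * n) / (lam * n))
    (εP : ℝ) (hεP : 0 < εP)
    (T₀ T : ℕ)
    (hT₀ : ((⌈(n : ℝ) * Real.log (Real.log (Real.exp 1 * n))⌉ : ℤ) : ℝ)
        + 16 * L ^ 2 / (lam * εP) ≤ T₀)
    (hT : (n : ℝ) + 4 * L ^ 2 / (lam * εP) ≤ (T : ℝ) - T₀) :
    (ExpIdx hn T (fun idx =>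
        primalObj lam x φ (wvec lam x
          ((1 / ((T : ℝ) - T₀)) • ∑ t ∈ Finset.Ico T₀ T, traj step α0 idx t))
        - dualObj lam x φ
          ((1 / ((T : ℝ) - T₀)) • ∑ t ∈ Finset.Ico T₀ T, traj step α0 idx t)) ≤ εP)
    ∧ ∀ t : ℕ, T₀ ≤ t →
        ExpIdx hn t (fun idx =>
          dualObj lam x φ αstar - dualObj lam x φ (traj step α0 idx t)) ≤ εP / 2 := by
  have hnR : (0:ℝ) < n := by exact_mod_cast hn
  have hn' : (n:ℝ) ≠ 0 := ne_of_gt hnR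
  have hn1 : (1:ℝ) ≤ n := by exact_mod_cast hn
  set C : ℝ := 2 * L ^ 2 / lam with hC
  have hL0 : (0:ℝ) ≤ L := by
    have h := hL ⟨0, hn⟩ 1 0
    have he : |(1:ℝ) - 0| = 1 := by norm_num
    rw [he, mul_one] at h
    exact le_trans (abs_nonneg _) h
  have hC0 : 0 ≤ C := div_nonneg (by positivity) hlam.le
  have hfeas : ∀ (idx : ℕ → Fin n) (t : ℕ), Feas φ (traj step α0 idx t) := by
    intro idx t
    induction t with
    | zero => exact hα0_feas
    | succ t ih => exact hstep_feas _ _ ih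
  have hDle : ∀ (idx : ℕ → Fin n) (t : ℕ),
      dualObj lam x φ (traj step α0 idx t) ≤ dualObj lam x φ αstar :=
    fun idx t => hstar_max _ (hfeas idx t)
  set dt : ℕ → ℝ := fun t =>
    ExpIdx hn t (fun idx => dualObj lam x φ (traj step α0 idx t)) with hdt
  set eD : ℕ → ℝ := fun t => dualObj lam x φ αstar - dt t with heD
  have heDeq : ∀ t, ExpIdx hn t (fun idx => dualObj lam x φ αstar
      - dualObj lam x φ (traj step α0 idx t)) = eD t := by
    intro t
    simp only [heD, hdt]
    calc ExpIdx hn t (fun idx => dualObj lam x φ αstar - dualObj lam x φ (traj step α0 idx t))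
        = ExpIdx hn t (fun _ => dualObj lam x φ αstar)
          - ExpIdx hn t (fun idx => dualObj lam x φ (traj step α0 idx t)) :=
          ExpIdx_sub hn t _ _
      _ = dualObj lam x φ αstar
          - ExpIdx hn t (fun idx => dualObj lam x φ (traj step α0 idx t)) := by
          rw [ExpIdx_const]
  have heD_nonneg : ∀ t, 0 ≤ eD t := by
    intro t
    have h2 : dt t ≤ dualObj lam x φ αstar := by
      have hm := ExpIdx_mono hn
        (g1 := fun idx => dualObj lam x φ (traj step α0 idx t))
        (g2 := fun _ => dualObj lam x φ αstar) (t := t) (fun idx => hDle idx t)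
      rwa [ExpIdx_const] at hm
    simp only [heD]
    linarith
  -- master inequality
  have master : ∀ (t : ℕ) (s : ℝ), 0 ≤ s → s ≤ 1 →
      s / n * ExpIdx hn t (fun idx =>
          primalObj lam x φ (wvec lam x (traj step α0 idx t))
            - dualObj lam x φ (traj step α0 idx t))
        ≤ dt (t+1) - dt t + (s/n)^2 * C := by
    intro t s hs0 hs1
    have hstep' : dt (t+1) = ExpIdx hn t (fun idx =>
        (∑ i : Fin n, dualObj lam x φ (step (traj step α0 idx t) i)) / n) := by
      simp only [hdt]
      exact ExpIdx_traj_succ hn step α0 t (dualObj lam x φ)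
    have hpt : ∀ idx : ℕ → Fin n,
        s / n * (primalObj lam x φ (wvec lam x (traj step α0 idx t))
          - dualObj lam x φ (traj step α0 idx t)) - (s/n)^2 * C
          + dualObj lam x φ (traj step α0 idx t)
        ≤ (∑ i : Fin n, dualObj lam x φ (step (traj step α0 idx t) i)) / n := by
      intro idx
      have hks := key_step hlam hn hconv hL hx hφ0 step hstep_max _ (hfeas idx t) hs0 hs1
      rw [← hC] at hks
      have hsplit : (1/(n:ℝ)) * ∑ i : Fin n,
            (dualObj lam x φ (step (traj step α0 idx t) i)
              - dualObj lam x φ (traj step α0 idx t))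
          = (∑ i : Fin n, dualObj lam x φ (step (traj step α0 idx t) i)) / n
            - dualObj lam x φ (traj step α0 idx t) := by
        rw [Finset.sum_sub_distrib, Finset.sum_const, Finset.card_univ, Fintype.card_fin,
          nsmul_eq_mul]
        set S := ∑ i : Fin n, dualObj lam x φ (step (traj step α0 idx t) i) with hSS
        set Dα := dualObj lam x φ (traj step α0 idx t) with hDα
        clear_value S Dα
        field_simp
      rw [hsplit] at hks
      linarith [hks]
    have hmono := ExpIdx_mono hn (t := t) hpt
    have hlin : ExpIdx hn t (fun idx =>
          s / n * (primalObj lam x φ (wvec lam x (traj step α0 idx t))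
            - dualObj lam x φ (traj step α0 idx t)) - (s/n)^2 * C
          + dualObj lam x φ (traj step α0 idx t))
        = s / n * ExpIdx hn t (fun idx =>
            primalObj lam x φ (wvec lam x (traj step α0 idx t))
              - dualObj lam x φ (traj step α0 idx t)) - (s/n)^2 * C + dt t := by
      simp only [hdt]
      simp only [ExpIdx_add, ExpIdx_sub, ExpIdx_mul_const, ExpIdx_const]
    rw [hlin, ← hstep'] at hmono
    linarith [hmono]
  -- gap dominates dual suboptimality
  have hgapGe : ∀ (t : ℕ) (idx : ℕ → Fin n),
      dualObj lam x φ αstar - dualObj lam x φ (traj step α0 idx t)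
      ≤ primalObj lam x φ (wvec lam x (traj step α0 idx t))
        - dualObj lam x φ (traj step α0 idx t) := by
    intro t idx
    have hw := weak_duality (x := x) hlam hn αstar hstar_feas (wvec lam x (traj step α0 idx t))
    linarith
  -- dual recursion
  have hrec : ∀ (t : ℕ) (s : ℝ), 0 ≤ s → s ≤ 1 →
      eD (t+1) ≤ (1 - s/n) * eD t + (s/n)^2 * C := by
    intro t s hs0 hs1
    have hm := master t s hs0 hs1
    have hGe : ExpIdx hn t (fun idx => dualObj lam x φ αstar
          - dualObj lam x φ (traj step α0 idx t))
        ≤ ExpIdx hn t (fun idx => primalObj lam x φ (wvec lam x (traj step α0 idx t))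
            - dualObj lam x φ (traj step α0 idx t)) :=
      ExpIdx_mono hn (fun idx => hgapGe t idx)
    rw [heDeq t] at hGe
    have hsn : 0 ≤ s / (n:ℝ) := by positivity
    have hmul := mul_le_mul_of_nonneg_left hGe hsn
    have e1 : eD (t+1) = dualObj lam x φ αstar - dt (t+1) := by simp only [heD]
    have e2 : eD t = dualObj lam x φ αstar - dt t := by simp only [heD]
    nlinarith [hm, hmul, e1, e2]
  -- phase 1
  have h1n : (0:ℝ) ≤ 1 - 1/(n:ℝ) := by
    have : 1/(n:ℝ) ≤ 1 := by rw [div_le_one hnR]; exact hn1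
    linarith
  have hphase1 : ∀ t, eD t ≤ C/(n:ℝ) + (1 - 1/(n:ℝ))^t * eD 0 := by
    intro t
    induction t with
    | zero =>
      have : (0:ℝ) ≤ C/(n:ℝ) := by positivity
      rw [pow_zero, one_mul]
      linarith
    | succ t ih =>
      have h := hrec t 1 zero_le_one le_rfl
      have h2 := mul_le_mul_of_nonneg_left ih h1n
      have heqq : (1 - 1/(n:ℝ)) * (C/(n:ℝ) + (1 - 1/(n:ℝ))^t * eD 0) + (1/(n:ℝ))^2 * C
          = C/(n:ℝ) + (1 - 1/(n:ℝ))^(t+1) * eD 0 := by ring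
      linarith [h, h2, heqq]
  -- the critical time t0
  have hlog1 : 1 ≤ Real.log (Real.exp 1 * n) := by
    rw [Real.log_mul (Real.exp_ne_zero 1) hn', Real.log_exp]
    have : 0 ≤ Real.log n := Real.log_nonneg hn1
    linarith
  have hloglog : 0 ≤ Real.log (Real.log (Real.exp 1 * n)) := Real.log_nonneg hlog1
  set t0 : ℕ := (⌈(n:ℝ) * Real.log (Real.log (Real.exp 1 * n))⌉).toNat with ht0
  have hceil_nonneg : (0:ℤ) ≤ ⌈(n:ℝ) * Real.log (Real.log (Real.exp 1 * n))⌉ :=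
    Int.ceil_nonneg (mul_nonneg hnR.le hloglog)
  have ht0z : ((t0:ℕ):ℤ) = ⌈(n:ℝ) * Real.log (Real.log (Real.exp 1 * n))⌉ := by
    rw [ht0]; exact Int.toNat_of_nonneg hceil_nonneg
  have ht0R : ((⌈(n:ℝ) * Real.log (Real.log (Real.exp 1 * n))⌉ : ℤ) : ℝ) = (t0:ℝ) := by
    rw [← ht0z]; push_cast; ring
  have ht0cast : (n:ℝ) * Real.log (Real.log (Real.exp 1 * n)) ≤ (t0:ℝ) := by
    have h1 := Int.le_ceil ((n:ℝ) * Real.log (Real.log (Real.exp 1 * n)))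
    linarith [ht0R]
  -- base for phase 2
  have hdt0 : dt 0 = dualObj lam x φ α0 := by
    simp only [hdt, traj]
    exact ExpIdx_const hn 0 _
  have he0 : eD 0 ≤ C * Real.log (Real.exp 1 * n) / n := by
    have he : eD 0 = dualObj lam x φ αstar - dualObj lam x φ α0 := by
      simp only [heD, hdt0]
    rw [he]
    refine hα0.trans (le_of_eq ?_)
    rw [hC]
    field_simp
  have hexp_bound : Real.exp (-((t0:ℝ)/(n:ℝ))) * Real.log (Real.exp 1 * n) ≤ 1 := by
    have h1 : Real.log (Real.log (Real.exp 1 * n)) ≤ (t0:ℝ)/(n:ℝ) := by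
      rw [le_div_iff₀ hnR]
      linarith [ht0cast]
    have h2 : Real.log (Real.exp 1 * n) ≤ Real.exp ((t0:ℝ)/(n:ℝ)) := by
      calc Real.log (Real.exp 1 * n)
          = Real.exp (Real.log (Real.log (Real.exp 1 * n))) :=
            (Real.exp_log (by linarith : (0:ℝ) < Real.log (Real.exp 1 * n))).symm
        _ ≤ Real.exp ((t0:ℝ)/(n:ℝ)) := Real.exp_le_exp.mpr h1
    rw [Real.exp_neg]
    have h3 := mul_le_mul_of_nonneg_left h2
      (inv_nonneg.mpr (Real.exp_pos ((t0:ℝ)/(n:ℝ))).le)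
    rwa [inv_mul_cancel₀ (Real.exp_ne_zero ((t0:ℝ)/(n:ℝ)))] at h3
  have hbase2 : eD t0 ≤ 2*C/(n:ℝ) := by
    have hp1 := hphase1 t0
    have hpow : (1 - 1/(n:ℝ))^t0 ≤ Real.exp (-((t0:ℝ)/(n:ℝ))) := by
      have h1 : (1 - 1/(n:ℝ)) ≤ Real.exp (-(1/(n:ℝ))) := by
        have := Real.add_one_le_exp (-(1/(n:ℝ)))
        linarith
      calc (1 - 1/(n:ℝ))^t0 ≤ (Real.exp (-(1/(n:ℝ))))^t0 := pow_le_pow_left₀ h1n h1 t0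
        _ = Real.exp (-((t0:ℝ)/(n:ℝ))) := by
            rw [← Real.exp_nat_mul]
            congr 1
            ring
    have h3 : (1 - 1/(n:ℝ))^t0 * eD 0
        ≤ Real.exp (-((t0:ℝ)/(n:ℝ))) * (C * Real.log (Real.exp 1 * n)/n) :=
      mul_le_mul hpow he0 (heD_nonneg 0) (Real.exp_pos _).le
    have h4 : Real.exp (-((t0:ℝ)/(n:ℝ))) * (C * Real.log (Real.exp 1 * n)/n) ≤ C/n := by
      have h5 := mul_le_mul_of_nonneg_right hexp_bound
        (by positivity : (0:ℝ) ≤ C/(n:ℝ))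
      calc Real.exp (-((t0:ℝ)/(n:ℝ))) * (C * Real.log (Real.exp 1 * n)/n)
          = (Real.exp (-((t0:ℝ)/(n:ℝ))) * Real.log (Real.exp 1 * n)) * (C/(n:ℝ)) := by ring
        _ ≤ 1 * (C/(n:ℝ)) := h5
        _ = C/(n:ℝ) := one_mul _
    have heq2 : 2*C/(n:ℝ) = C/(n:ℝ) + C/(n:ℝ) := by ring
    linarith [hp1, h3, h4]
  -- phase 2
  have hphase2 : ∀ k : ℕ, eD (t0 + k) ≤ 4*C/(2*(n:ℝ) + k) := by
    intro k
    induction k with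
    | zero =>
      have heq : 4*C/(2*(n:ℝ) + ((0:ℕ):ℝ)) = 2*C/(n:ℝ) := by
        rw [Nat.cast_zero, add_zero]
        field_simp
        ring
      rw [Nat.add_zero, heq]
      exact hbase2
    | succ k ih =>
      set m : ℝ := 2*(n:ℝ) + k with hm
      have hm2n : 2*(n:ℝ) ≤ m := by
        rw [hm]; exact le_add_of_nonneg_right (Nat.cast_nonneg k)
      have hm2 : (2:ℝ) ≤ m := by linarith
      have hmpos : (0:ℝ) < m := by linarith
      have hs1 : 2*(n:ℝ)/m ≤ 1 := by rw [div_le_one hmpos]; exact hm2n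
      have hs0 : (0:ℝ) ≤ 2*(n:ℝ)/m := by positivity
      have h := hrec (t0 + k) (2*(n:ℝ)/m) hs0 hs1
      have hsn : (2*(n:ℝ)/m)/(n:ℝ) = 2/m := by
        field_simp
      rw [hsn] at h
      have h2m : (0:ℝ) ≤ 1 - 2/m := by
        rw [sub_nonneg, div_le_one hmpos]; exact hm2
      have h3 := mul_le_mul_of_nonneg_left ih h2m
      have key : (1 - 2/m)*(4*C/m) + (2/m)^2*C ≤ 4*C/(m+1) := by
        have he : (1 - 2/m)*(4*C/m) + (2/m)^2*C = 4*C*(m-1)/m^2 := by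
          field_simp
          ring
        rw [he, div_le_div_iff₀ (by positivity) (by linarith : (0:ℝ) < m + 1)]
        nlinarith [hC0]
      have hcast : 2*(n:ℝ) + ((k+1 : ℕ):ℝ) = m + 1 := by
        rw [hm]; push_cast; ring
      rw [← Nat.add_assoc, hcast]
      linarith [h, h3, key]
  -- dual claim
  have h16 : (0:ℝ) ≤ 16*L^2/(lam*εP) := by positivity
  have hT₀R : (t0:ℝ) + 16*L^2/(lam*εP) ≤ (T₀:ℝ) := by
    rw [ht0R] at hT₀
    linarith [hT₀]
  have hdual_claim : ∀ t : ℕ, T₀ ≤ t → eD t ≤ εP/2 := by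
    intro t ht
    have htR : (T₀:ℝ) ≤ (t:ℝ) := by exact_mod_cast ht
    have ht0T : t0 ≤ t := by
      have hx1 : (t0:ℝ) ≤ (t:ℝ) := by linarith
      exact_mod_cast hx1
    obtain ⟨k, hk⟩ : ∃ k, t = t0 + k := ⟨t - t0, by omega⟩
    subst hk
    have hp2 := hphase2 k
    have hkR : 16*L^2/(lam*εP) ≤ (k:ℝ) := by
      have hc1 : ((t0 + k : ℕ):ℝ) = (t0:ℝ) + k := by push_cast; ring
      linarith [htR, hc1]
    have h8C : 8*C ≤ εP*(2*(n:ℝ)+k) := by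
      have hq : εP * (16*L^2/(lam*εP)) = 8*C := by
        rw [hC]; field_simp; ring
      have hq2 := mul_le_mul_of_nonneg_left hkR hεP.le
      have hq3 : (0:ℝ) ≤ εP * (2*(n:ℝ)) := mul_nonneg hεP.le (by positivity)
      nlinarith [hq, hq2, hq3]
    refine hp2.trans ?_
    rw [div_le_div_iff₀ (by linarith : (0:ℝ) < 2*(n:ℝ)+k) (by norm_num : (0:ℝ) < 2)]
    linarith [h8C]
  constructor
  · -- gap claim
    have h4C : 4*L^2/(lam*εP) = 2*C/εP := by rw [hC]; field_simp; ring
    have h2Cε : (0:ℝ) ≤ 2*C/εP := by positivity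
    have h40 : (0:ℝ) ≤ 4 * L ^ 2 / (lam * εP) := by positivity
    have hTgt : T₀ < T := by
      have hx1 : (T₀:ℝ) < T := by linarith [hT, h40, hn1]
      exact_mod_cast hx1
    set τ : ℕ := T - T₀ with hτ
    have hτR : (τ:ℝ) = (T:ℝ) - T₀ := by
      rw [hτ]; push_cast [Nat.cast_sub hTgt.le]; ring
    have hτn : (n:ℝ) ≤ τ := by
      rw [hτR]
      linarith [hT, h40]
    have hτpos : (0:ℝ) < τ := by linarith
    have hτC : 2*C/εP ≤ (τ:ℝ) := by
      rw [hτR]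
      linarith [hT, hnR, h4C]
    have hτ0 : (τ:ℝ) ≠ 0 := ne_of_gt hτpos
    have hs0' : (0:ℝ) ≤ (n:ℝ)/τ := by positivity
    have hs1' : (n:ℝ)/τ ≤ 1 := by rw [div_le_one hτpos]; exact hτn
    have hsτ : ((n:ℝ)/(τ:ℝ))/(n:ℝ) = 1/(τ:ℝ) := by
      field_simp
    -- per-time gap bound
    have hgapE : ∀ t : ℕ,
        ExpIdx hn t (fun idx => primalObj lam x φ (wvec lam x (traj step α0 idx t))
          - dualObj lam x φ (traj step α0 idx t))
        ≤ (τ:ℝ) * (dt (t+1) - dt t) + C/τ := by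
      intro t
      have hm := master t ((n:ℝ)/τ) hs0' hs1'
      rw [hsτ] at hm
      set G := ExpIdx hn t (fun idx => primalObj lam x φ (wvec lam x (traj step α0 idx t))
          - dualObj lam x φ (traj step α0 idx t)) with hGdef
      calc G = (τ:ℝ) * (1/(τ:ℝ) * G) := by field_simp
        _ ≤ (τ:ℝ) * ((dt (t+1) - dt t) + (1/(τ:ℝ))^2 * C) :=
            mul_le_mul_of_nonneg_left hm hτpos.le
        _ = (τ:ℝ) * (dt (t+1) - dt t) + C/τ := by field_simp
    -- telescoping
    have htel : ∑ t ∈ Finset.Ico T₀ T, (dt (t+1) - dt t) = dt T - dt T₀ := by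
      have hgen : ∀ T' : ℕ, T₀ ≤ T' →
          ∑ t ∈ Finset.Ico T₀ T', (dt (t+1) - dt t) = dt T' - dt T₀ := by
        intro T' hT'
        induction T', hT' using Nat.le_induction with
        | base => simp
        | succ T' hT' ih =>
          rw [Finset.sum_Ico_succ_top hT', ih]
          ring
      exact hgen T hTgt.le
    have hdtdiff : dt T - dt T₀ ≤ εP/2 := by
      have e1 : eD T = dualObj lam x φ αstar - dt T := by simp only [heD]
      have e2 : eD T₀ = dualObj lam x φ αstar - dt T₀ := by simp only [heD]
      linarith [hdual_claim T₀ le_rfl, heD_nonneg T, e1, e2]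
    have hsumgap : ∑ t ∈ Finset.Ico T₀ T,
        ExpIdx hn t (fun idx => primalObj lam x φ (wvec lam x (traj step α0 idx t))
          - dualObj lam x φ (traj step α0 idx t))
        ≤ (τ:ℝ) * (εP/2) + C := by
      calc ∑ t ∈ Finset.Ico T₀ T,
          ExpIdx hn t (fun idx => primalObj lam x φ (wvec lam x (traj step α0 idx t))
            - dualObj lam x φ (traj step α0 idx t))
          ≤ ∑ t ∈ Finset.Ico T₀ T, ((τ:ℝ) * (dt (t+1) - dt t) + C/τ) :=
            Finset.sum_le_sum fun t _ => hgapE t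
        _ = (τ:ℝ) * (dt T - dt T₀) + ((Finset.Ico T₀ T).card : ℝ) * (C/τ) := by
            rw [Finset.sum_add_distrib, ← Finset.mul_sum, htel, Finset.sum_const, nsmul_eq_mul]
        _ = (τ:ℝ) * (dt T - dt T₀) + C := by
            rw [Nat.card_Ico, ← hτ]
            field_simp
        _ ≤ (τ:ℝ) * (εP/2) + C := by
            have := mul_le_mul_of_nonneg_left hdtdiff hτpos.le
            linarith [this]
    -- Jensen for the average
    have hjen : ∀ idx : ℕ → Fin n,
        primalObj lam x φ (wvec lam x
            ((1 / ((T : ℝ) - T₀)) • ∑ t ∈ Finset.Ico T₀ T, traj step α0 idx t))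
          - dualObj lam x φ
            ((1 / ((T : ℝ) - T₀)) • ∑ t ∈ Finset.Ico T₀ T, traj step α0 idx t)
        ≤ ∑ t ∈ Finset.Ico T₀ T, (1/(τ:ℝ)) *
            (primalObj lam x φ (wvec lam x (traj step α0 idx t))
              - dualObj lam x φ (traj step α0 idx t)) := by
      intro idx
      have hform : (1 / ((T : ℝ) - T₀)) • ∑ t ∈ Finset.Ico T₀ T, traj step α0 idx t
          = ∑ t ∈ Finset.Ico T₀ T, (1/(τ:ℝ)) • traj step α0 idx t := by
        rw [← hτR, Finset.smul_sum]
      rw [hform]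
      refine gap_avg hlam hn hconv (Finset.Ico T₀ T) _ _ (fun k _ => by positivity) ?_
        (fun k _ => hfeas idx k)
      rw [Finset.sum_const, Nat.card_Ico, ← hτ, nsmul_eq_mul]
      field_simp
    refine le_trans (ExpIdx_mono hn hjen) ?_
    calc ExpIdx hn T (fun idx => ∑ t ∈ Finset.Ico T₀ T, (1/(τ:ℝ)) *
            (primalObj lam x φ (wvec lam x (traj step α0 idx t))
              - dualObj lam x φ (traj step α0 idx t)))
        = ∑ t ∈ Finset.Ico T₀ T, ExpIdx hn T (fun idx => (1/(τ:ℝ)) *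
            (primalObj lam x φ (wvec lam x (traj step α0 idx t))
              - dualObj lam x φ (traj step α0 idx t))) :=
          ExpIdx_finsum hn T (Finset.Ico T₀ T) _
      _ = ∑ t ∈ Finset.Ico T₀ T, (1/(τ:ℝ)) * ExpIdx hn t
            (fun idx => primalObj lam x φ (wvec lam x (traj step α0 idx t))
              - dualObj lam x φ (traj step α0 idx t)) := by
          refine Finset.sum_congr rfl fun t ht' => ?_
          have hle : t ≤ T := le_of_lt (Finset.mem_Ico.1 ht').2
          calc ExpIdx hn T (fun idx => (1/(τ:ℝ)) *
              (primalObj lam x φ (wvec lam x (traj step α0 idx t))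
                - dualObj lam x φ (traj step α0 idx t)))
              = (1/(τ:ℝ)) * ExpIdx hn T
                (fun idx => primalObj lam x φ (wvec lam x (traj step α0 idx t))
                  - dualObj lam x φ (traj step α0 idx t)) := ExpIdx_mul_const hn T _ _
            _ = (1/(τ:ℝ)) * ExpIdx hn t
                (fun idx => primalObj lam x φ (wvec lam x (traj step α0 idx t))
                  - dualObj lam x φ (traj step α0 idx t)) :=
              congrArg (fun z => (1/(τ:ℝ)) * z)
                (ExpIdx_traj_stable hn step α0 hle
                  (fun β => primalObj lam x φ (wvec lam x β) - dualObj lam x φ β))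
      _ = (1/(τ:ℝ)) * ∑ t ∈ Finset.Ico T₀ T, ExpIdx hn t
            (fun idx => primalObj lam x φ (wvec lam x (traj step α0 idx t))
              - dualObj lam x φ (traj step α0 idx t)) := by
          rw [Finset.mul_sum]
      _ ≤ (1/(τ:ℝ)) * ((τ:ℝ) * (εP/2) + C) :=
          mul_le_mul_of_nonneg_left hsumgap (by positivity)
      _ = εP/2 + C/τ := by field_simp
      _ ≤ εP := by
          have hCτ : C/(τ:ℝ) ≤ εP/2 := by
            rw [div_le_iff₀ hτpos]
            have hq := mul_le_mul_of_nonneg_left hτC hεP.le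
            have hq2 : εP * (2*C/εP) = 2*C := by field_simp
            nlinarith [hq, hq2]
          linarith [hCτ]
  · -- dual suboptimality claim
    intro t ht
    rw [heDeq t]
    exact hdual_claim t ht
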